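/- Let G be a connected k-uniform hypergraph and G' be obtained from G by moving edges e_1,...,e_r from vertices v_1,...,v_r to a vertex u (where u ∉ e_i, v_i ∈ e_i, and e'_i = (e_i \ {v_i}) ∪ {u}), with G' having no multiple edges. If x is a Perron vector of G with x_u ≥ max_{1≤i≤r} x_{v_i}, then ρ(G') > ρ(G). -/

import Mathlib

open Finset

/-- A `k`-uniform hypergraph on vertex type `V`. -/
structure KHypergraph (V : Type*) (k : ℕ) where
  edges : Finset (Finset V)
  uniform : ∀ e ∈ edges, e.card = k

namespace KHypergraph

variable {V : Type*} {k : ℕ}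

/-- The degree of a vertex: the number of edges containing it. -/
def degree [DecidableEq V] (G : KHypergraph V k) (v : V) : ℕ :=
  (G.edges.filter fun e => v ∈ e).card

/-- There is a walk from `a` to `b`. -/
def HasWalk (G : KHypergraph V k) (a b : V) : Prop :=
  ∃ (l : ℕ) (v : Fin (l + 1) → V) (e : Fin l → Finset V),
    v 0 = a ∧ v (Fin.last l) = b ∧
    ∀ i : Fin l, e i ∈ G.edges ∧ v i.castSucc ∈ e i ∧ v i.succ ∈ e i

/-- `G` is connected: every two vertices are joined by a walk. -/
def Connected (G : KHypergraph V k) : Prop := ∀ a b : V, G.HasWalk a b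

/-- A cycle `v_0 e_1 v_1 ⋯ e_l v_0`: pairwise distinct vertices, pairwise
distinct edges, with `{v i, v (i+1)} ⊆ e i` (indices mod `len`). -/
structure HCycle (G : KHypergraph V k) where
  len : ℕ
  two_le : 2 ≤ len
  vtx : Fin len → V
  edg : Fin len → Finset V
  vtx_inj : Function.Injective vtx
  edg_inj : Function.Injective edg
  edg_mem : ∀ i, edg i ∈ G.edges
  fst_mem : ∀ i, vtx i ∈ edg i
  snd_mem : ∀ i : Fin len, vtx ⟨((i : ℕ) + 1) % len, Nat.mod_lt _ (by omega)⟩ ∈ edg i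

/-- `G` contains no cycle. -/
def Acyclic (G : KHypergraph V k) : Prop := IsEmpty (HCycle G)

/-- A hypertree is a connected acyclic hypergraph. -/
def IsHypertree (G : KHypergraph V k) : Prop := G.Connected ∧ G.Acyclic

/-- `G` is unicyclic: connected with exactly one cycle (any two cycles have
the same vertex set and the same edge set). -/
def IsUnicyclic (G : KHypergraph V k) : Prop :=
  G.Connected ∧ Nonempty (HCycle G) ∧
    ∀ C C' : HCycle G,
      Set.range C.vtx = Set.range C'.vtx ∧ Set.range C.edg = Set.range C'.edg

/-- The girth: the minimum length of a cycle. -/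
noncomputable def girth (G : KHypergraph V k) : ℕ := sInf {l | ∃ C : HCycle G, C.len = l}

/-- `G` is linear: any two distinct edges meet in at most one vertex. -/
def Linear [DecidableEq V] (G : KHypergraph V k) : Prop :=
  ∀ e ∈ G.edges, ∀ f ∈ G.edges, e ≠ f → (e ∩ f).card ≤ 1

/-- Bicyclic: connected with cyclomatic number `m(k-1) - n + 1 = 2`. -/
def IsBicyclic [Fintype V] (G : KHypergraph V k) : Prop :=
  G.Connected ∧ G.edges.card * (k - 1) = Fintype.card V + 1

end KHypergraph

/-- Isomorphism of `k`-uniform hypergraphs. -/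
def HIso {V W : Type*} [DecidableEq W] {k : ℕ} (G : KHypergraph V k) (H : KHypergraph W k) : Prop :=
  ∃ φ : V ≃ W, ∀ e : Finset V, e ∈ G.edges ↔ e.image (φ : V → W) ∈ H.edges

section Tensor

variable {V : Type*} {k : ℕ}

/-- Prepend `i` to a `(k-1)`-tuple, obtaining a `k`-tuple. -/
def tupleCons (i : V) (g : Fin (k - 1) → V) : Fin k → V :=
  fun j => if h : (j : ℕ) = 0 then i else g ⟨(j : ℕ) - 1, by have := j.isLt; omega⟩

/-- `(T x^{k-1})_i = ∑_{i_2,…,i_k} t_{i i_2 … i_k} x_{i_2} ⋯ x_{i_k}`. -/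
def tApply [Fintype V] {R : Type*} [CommSemiring R] (T : (Fin k → V) → R) (x : V → R) (i : V) : R :=
  ∑ g : Fin (k - 1) → V, T (tupleCons i g) * ∏ j, x (g j)

/-- `lam ∈ ℂ` is an eigenvalue of the real tensor `T`:
`T x^{k-1} = lam x^{[k-1]}` for some `x ≠ 0`. -/
def IsEig [Fintype V] (T : (Fin k → V) → ℝ) (lam : ℂ) : Prop :=
  ∃ x : V → ℂ, x ≠ 0 ∧ ∀ i, tApply (fun f => ((T f : ℝ) : ℂ)) x i = lam * x i ^ (k - 1)

/-- The spectral radius of a tensor: the maximum modulus of its eigenvalues. -/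
noncomputable def specRad [Fintype V] (T : (Fin k → V) → ℝ) : ℝ :=
  sSup {r : ℝ | ∃ lam : ℂ, IsEig T lam ∧ ‖lam‖ = r}

/-- The arc `i → j` of the digraph `G(T)` associated with a nonnegative tensor. -/
def arcRel (T : (Fin k → V) → ℝ) (i j : V) : Prop :=
  ∃ g : Fin (k - 1) → V, 0 < T (tupleCons i g) ∧ ∃ l, g l = j

/-- `T` is weakly irreducible: the associated digraph is strongly connected. -/
def WeaklyIrreducible (T : (Fin k → V) → ℝ) : Prop :=
  ∀ a b : V, Relation.ReflTransGen (arcRel T) a b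

/-- The adjacency tensor of a `k`-uniform hypergraph: entry `1/(k-1)!` on
tuples of distinct vertices forming an edge, `0` otherwise. -/
noncomputable def adjTensor [Fintype V] [DecidableEq V] (G : KHypergraph V k) : (Fin k → V) → ℝ :=
  fun f => if Function.Injective f ∧ Finset.image f Finset.univ ∈ G.edges
    then ((Nat.factorial (k - 1) : ℝ))⁻¹ else 0

/-- The spectral radius of a hypergraph. -/
noncomputable def hSpecRad [Fintype V] [DecidableEq V] (G : KHypergraph V k) : ℝ :=
  specRad (adjTensor G)

/-- `x` is a Perron vector of `G`: a positive eigenvector for `ρ(G)`. -/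
def IsPerron [Fintype V] [DecidableEq V] (G : KHypergraph V k) (x : V → ℝ) : Prop :=
  (∀ v, 0 < x v) ∧ ∀ i, tApply (adjTensor G) x i = hSpecRad G * x i ^ (k - 1)

end Tensor

section Shapes

variable {V : Type*} {k : ℕ}

/-- A hyperstar: all edges share a common vertex `c`, and pairwise meet exactly in `c`. -/
def IsHyperstar [DecidableEq V] (G : KHypergraph V k) : Prop :=
  G.Connected ∧ ∃ c : V, (∀ e ∈ G.edges, c ∈ e) ∧
    ∀ e ∈ G.edges, ∀ f ∈ G.edges, e ≠ f → e ∩ f = {c}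

/-- `H` is the `k`-th power of the simple graph (2-uniform hypergraph) `B`:
each edge of `B` is enlarged by `k-2` new vertices, all distinct. -/
def IsPowerOf [DecidableEq V] {W : Type*} (H : KHypergraph V k) (B : KHypergraph W 2) : Prop :=
  ∃ (ι : W ↪ V) (ν : ({e // e ∈ B.edges} × Fin (k - 2)) ↪ V),
    (∀ w p, ι w ≠ ν p) ∧
    (∀ v : V, (∃ w, ι w = v) ∨ (∃ p, ν p = v)) ∧
    H.edges = B.edges.attach.image
      (fun e => e.1.map ι ∪ Finset.image (fun j : Fin (k - 2) => ν (e, j)) Finset.univ)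

/-- `H` is a power hypergraph: the `k`-th power of some simple graph. -/
def IsPowerHG [DecidableEq V] (H : KHypergraph V k) : Prop :=
  ∃ (W : Type) (B : KHypergraph W 2), IsPowerOf H B

/-- The shape of `S_{m,g}^k`: a linear unicyclic hypergraph with `m` edges and
girth `g`, whose cycle has length `g`, all non-cycle edges being pendant edges
at a common cycle vertex `u` (their other vertices having degree one). -/
def IsSmg [DecidableEq V] (g m : ℕ) (G : KHypergraph V k) : Prop :=
  G.IsUnicyclic ∧ G.Linear ∧ G.edges.card = m ∧ G.girth = g ∧
    ∃ (C : KHypergraph.HCycle G) (u : V), C.len = g ∧ (∃ i, C.vtx i = u) ∧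
      ∀ f ∈ G.edges, (∃ i, C.edg i = f) ∨
        (u ∈ f ∧ ∀ w ∈ f, w ≠ u → G.degree w = 1)

/-- The shape of `B_m^P`: the `k`-th power of `K_4` minus an edge (two triangles
on `a,b,c` and `a,b,d` sharing base `a b`) with a hyperstar of `m - 5` edges
attached at the degree-3 vertex `a`. -/
def IsBmP [DecidableEq V] (m : ℕ) (G : KHypergraph V k) : Prop :=
  G.Connected ∧ G.edges.card = m ∧
    ∃ (a b c d : V) (f : Fin 5 → Finset V),
      (a ≠ b ∧ a ≠ c ∧ a ≠ d ∧ b ≠ c ∧ b ≠ d ∧ c ≠ d) ∧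
      Function.Injective f ∧ (∀ i, f i ∈ G.edges) ∧
      f 0 ∩ {a, b, c, d} = {a, b} ∧
      f 1 ∩ {a, b, c, d} = {a, c} ∧
      f 2 ∩ {a, b, c, d} = {b, c} ∧
      f 3 ∩ {a, b, c, d} = {a, d} ∧
      f 4 ∩ {a, b, c, d} = {b, d} ∧
      (∀ i, ∀ w ∈ f i, w ∉ ({a, b, c, d} : Finset V) → G.degree w = 1) ∧
      (∀ e ∈ G.edges, (∀ i, f i ≠ e) → a ∈ e ∧ ∀ w ∈ e, w ≠ a → G.degree w = 1)

/-- The core `G_5`: an edge `e ⊇ {v1,v2,v3}` and three further edges joining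
`v1, v2, v3` to a common vertex `w` outside `e`; all vertices of these four
edges other than `w, v1, v2, v3` have degree one. -/
def G5Core [DecidableEq V] (G : KHypergraph V k) (w v1 v2 v3 : V) (e g1 g2 g3 : Finset V) : Prop :=
  (w ≠ v1 ∧ w ≠ v2 ∧ w ≠ v3 ∧ v1 ≠ v2 ∧ v1 ≠ v3 ∧ v2 ≠ v3) ∧
  (e ∈ G.edges ∧ g1 ∈ G.edges ∧ g2 ∈ G.edges ∧ g3 ∈ G.edges) ∧
  (e ≠ g1 ∧ e ≠ g2 ∧ e ≠ g3 ∧ g1 ≠ g2 ∧ g1 ≠ g3 ∧ g2 ≠ g3) ∧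
  e ∩ {w, v1, v2, v3} = {v1, v2, v3} ∧
  g1 ∩ {w, v1, v2, v3} = {w, v1} ∧
  g2 ∩ {w, v1, v2, v3} = {w, v2} ∧
  g3 ∩ {w, v1, v2, v3} = {w, v3} ∧
  (∀ f ∈ ({e, g1, g2, g3} : Finset (Finset V)), ∀ x ∈ f, x ∉ ({w, v1, v2, v3} : Finset V) →
    G.degree x = 1)

/-- `B_m^L(1)`: `G_5` with a hyperstar of `m-4` edges attached at the degree-3 vertex `w`. -/
def IsBmL1 [DecidableEq V] (m : ℕ) (G : KHypergraph V k) : Prop :=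
  G.Connected ∧ G.edges.card = m ∧
    ∃ (w v1 v2 v3 : V) (e g1 g2 g3 : Finset V), G5Core G w v1 v2 v3 e g1 g2 g3 ∧
      ∀ f ∈ G.edges, f ∉ ({e, g1, g2, g3} : Finset (Finset V)) →
        w ∈ f ∧ ∀ x ∈ f, x ≠ w → G.degree x = 1

/-- `B_m^L(2)`: `G_5` with a hyperstar of `m-4` edges attached at a degree-2 vertex `v1`. -/
def IsBmL2 [DecidableEq V] (m : ℕ) (G : KHypergraph V k) : Prop :=
  G.Connected ∧ G.edges.card = m ∧
    ∃ (w v1 v2 v3 : V) (e g1 g2 g3 : Finset V), G5Core G w v1 v2 v3 e g1 g2 g3 ∧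
      ∀ f ∈ G.edges, f ∉ ({e, g1, g2, g3} : Finset (Finset V)) →
        v1 ∈ f ∧ ∀ x ∈ f, x ≠ v1 → G.degree x = 1

/-- The support (vertex set) of a set of edges. -/
def esupp {V : Type*} [DecidableEq V] (E : Finset (Finset V)) : Finset V := E.sup id

end Shapes

section EdgeMovingAux

set_option linter.unusedSectionVars false

open Finset

variable {V : Type*} [Fintype V] [DecidableEq V] {k : ℕ}

/-- Sum over edge products. -/
noncomputable def PP (H : KHypergraph V k) (y : V → ℝ) : ℝ :=
  ∑ f ∈ H.edges, ∏ w ∈ f, y w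

/-- Sum over edges through `i` of products of the other vertices. -/
noncomputable def SS (H : KHypergraph V k) (i : V) (y : V → ℝ) : ℝ :=
  ∑ f ∈ H.edges.filter (fun f => i ∈ f), ∏ w ∈ f.erase i, y w

lemma fin_zero_or_succ (hk : 1 ≤ k) (a : Fin k) :
    a = ⟨0, by omega⟩ ∨ ∃ j : Fin (k - 1), a = ⟨(j : ℕ) + 1, by omega⟩ := by
  by_cases h : (a : ℕ) = 0
  · left; ext; simpa using h
  · right
    refine ⟨⟨(a : ℕ) - 1, by have := a.isLt; omega⟩, ?_⟩
    ext; simp; omega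

lemma tupleCons_zero (hk : 1 ≤ k) (i : V) (g : Fin (k - 1) → V) :
    tupleCons i g ⟨0, by omega⟩ = i := by
  simp [tupleCons]

lemma tupleCons_succ (i : V) (g : Fin (k - 1) → V) (j : Fin (k - 1)) :
    tupleCons i g ⟨(j : ℕ) + 1, by have := j.isLt; omega⟩ = g j := by
  have hj : ((⟨(j : ℕ) + 1, by have := j.isLt; omega⟩ : Fin k) : ℕ) ≠ 0 := by simp
  simp only [tupleCons, dif_neg hj]
  congr 1

lemma image_tupleCons (hk : 1 ≤ k) (i : V) (g : Fin (k - 1) → V) :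
    image (tupleCons i g) univ = insert i (image g univ) := by
  ext w
  simp only [mem_image, mem_univ, true_and, mem_insert]
  constructor
  · rintro ⟨a, rfl⟩
    rcases fin_zero_or_succ hk a with rfl | ⟨j, rfl⟩
    · left; exact tupleCons_zero hk i g
    · right; exact ⟨j, (tupleCons_succ i g j).symm⟩
  · rintro (h | ⟨j, h⟩)
    · exact ⟨⟨0, by omega⟩, by rw [tupleCons_zero hk, h]⟩
    · exact ⟨⟨(j : ℕ) + 1, by have := j.isLt; omega⟩, by rw [tupleCons_succ, h]⟩

lemma tupleCons_inj_iff (hk : 1 ≤ k) (i : V) (g : Fin (k - 1) → V) :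
    Function.Injective (tupleCons i g) ↔
      Function.Injective g ∧ i ∉ image g univ := by
  constructor
  · intro h
    constructor
    · intro a b hab
      have : tupleCons i g ⟨(a : ℕ) + 1, by have := a.isLt; omega⟩
          = tupleCons i g ⟨(b : ℕ) + 1, by have := b.isLt; omega⟩ := by
        rw [tupleCons_succ, tupleCons_succ, hab]
      have := congrArg Fin.val (h this)
      ext; simpa using this
    · intro hi
      obtain ⟨j, -, hj⟩ := mem_image.mp hi
      have : tupleCons i g ⟨(j : ℕ) + 1, by have := j.isLt; omega⟩
          = tupleCons i g ⟨0, by omega⟩ := by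
        rw [tupleCons_succ, tupleCons_zero hk, hj]
      have := congrArg Fin.val (h this)
      simp at this
  · rintro ⟨hg, hi⟩
    intro a b hab
    rcases fin_zero_or_succ hk a with rfl | ⟨ja, rfl⟩ <;>
      rcases fin_zero_or_succ hk b with rfl | ⟨jb, rfl⟩
    · rfl
    · rw [tupleCons_zero hk, tupleCons_succ] at hab
      exact absurd (hab ▸ mem_image_of_mem g (mem_univ jb)) hi
    · rw [tupleCons_zero hk, tupleCons_succ] at hab
      exact absurd (hab ▸ mem_image_of_mem g (mem_univ ja)) hi
    · rw [tupleCons_succ, tupleCons_succ] at hab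
      have := congrArg Fin.val (hg hab)
      ext; simpa using this

end EdgeMovingAux
section EdgeMovingAux2

set_option linter.unusedSectionVars false
set_option maxHeartbeats 1000000

open Finset

variable {V : Type*} [Fintype V] [DecidableEq V] {k : ℕ}

lemma card_inj_image_eq {n : ℕ} (s : Finset V) (hs : s.card = n) :
    Fintype.card {g : Fin n → V // Function.Injective g ∧ image g univ = s}
      = n.factorial := by
  classical
  have hcard : Fintype.card (Fin n) = Fintype.card {x // x ∈ s} := by
    simp [Fintype.card_coe, hs]
  have E : {g : Fin n → V // Function.Injective g ∧ image g univ = s}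
      ≃ (Fin n ≃ {x // x ∈ s}) := by
    refine
      { toFun := fun g => Equiv.ofBijective
          (fun j => ⟨g.1 j, by
            have h := mem_image_of_mem g.1 (mem_univ j)
            rwa [g.2.2] at h⟩)
          ((Fintype.bijective_iff_injective_and_card _).2
            ⟨fun a b hab => g.2.1 (by simpa using congrArg Subtype.val hab), hcard⟩)
        invFun := fun φ => ⟨fun j => (φ j : V), ?_, ?_⟩
        left_inv := ?_
        right_inv := ?_ }
    · intro a b hab
      exact φ.injective (Subtype.ext hab)
    · ext w
      simp only [mem_image, mem_univ, true_and]
      constructor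
      · rintro ⟨j, rfl⟩; exact (φ j).2
      · intro hw
        exact ⟨φ.symm ⟨w, hw⟩, by simp⟩
    · intro g; rfl
    · intro φ
      ext j
      simp [Equiv.ofBijective]
  rw [Fintype.card_congr E, Fintype.card_equiv (Fintype.equivOfCardEq hcard)]
  simp

lemma sum_inj_image_eq {n : ℕ} (s : Finset V) (hs : s.card = n) (y : V → ℝ) :
    ∑ g ∈ univ.filter
        (fun g : Fin n → V => Function.Injective g ∧ image g univ = s),
      ∏ j, y (g j) = (n.factorial : ℝ) * ∏ w ∈ s, y w := by
  classical
  have hterm : ∀ g ∈ univ.filter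
      (fun g : Fin n → V => Function.Injective g ∧ image g univ = s),
      ∏ j, y (g j) = ∏ w ∈ s, y w := by
    intro g hg
    simp only [mem_filter] at hg
    obtain ⟨-, hinj, himg⟩ := hg
    rw [← himg, prod_image (fun a _ b _ h => hinj h)]
  rw [Finset.sum_congr rfl hterm, Finset.sum_const, nsmul_eq_mul]
  congr 2
  rw [← Fintype.card_subtype]
  exact card_inj_image_eq s hs

lemma tApply_adj (hk : 1 ≤ k) (H : KHypergraph V k) (y : V → ℝ) (i : V) :
    tApply (adjTensor H) y i = SS H i y := by
  classical
  unfold tApply adjTensor SS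
  simp only [ite_mul, zero_mul]
  rw [← Finset.sum_filter]
  rw [← Finset.sum_fiberwise_of_maps_to (g := fun g : Fin (k - 1) → V =>
        image (tupleCons i g) univ)
      (t := H.edges.filter (fun f => i ∈ f))
      (by
        intro g hg
        simp only [mem_filter, mem_univ, true_and] at hg ⊢
        refine ⟨hg.2, ?_⟩
        rw [image_tupleCons hk]
        exact mem_insert_self _ _)]
  refine Finset.sum_congr rfl ?_
  intro f hf
  simp only [mem_filter] at hf
  obtain ⟨hfe, hif⟩ := hf
  have hcardf : f.card = k := H.uniform f hfe
  have hfiber : (univ.filter (fun g : Fin (k - 1) → V =>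
        Function.Injective (tupleCons i g) ∧ image (tupleCons i g) univ ∈ H.edges)).filter
        (fun g => image (tupleCons i g) univ = f)
      = univ.filter (fun g : Fin (k - 1) → V =>
        Function.Injective g ∧ image g univ = f.erase i) := by
    ext g
    simp only [mem_filter, mem_univ, true_and]
    constructor
    · rintro ⟨⟨hinjc, -⟩, himg⟩
      obtain ⟨hg, hi⟩ := (tupleCons_inj_iff hk i g).1 hinjc
      refine ⟨hg, ?_⟩
      rw [← himg, image_tupleCons hk, Finset.erase_insert hi]
    · rintro ⟨hg, himg⟩
      have hi : i ∉ image g univ := by rw [himg]; exact notMem_erase i f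
      have hinj := (tupleCons_inj_iff hk i g).2 ⟨hg, hi⟩
      have himg2 : image (tupleCons i g) univ = f := by
        rw [image_tupleCons hk, himg, Finset.insert_erase hif]
      exact ⟨⟨hinj, himg2 ▸ hfe⟩, himg2⟩
  rw [hfiber, ← Finset.mul_sum,
    sum_inj_image_eq (f.erase i) (by rw [card_erase_of_mem hif, hcardf]) y,
    ← mul_assoc, inv_mul_cancel₀ (by positivity), one_mul]

end EdgeMovingAux2
section EdgeMovingAux3

set_option linter.unusedSectionVars false
set_option maxHeartbeats 1000000

open Finset

variable {V : Type*} [Fintype V] [DecidableEq V] {k : ℕ}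

lemma PP_nonneg (H : KHypergraph V k) {y : V → ℝ} (hy : ∀ i, 0 ≤ y i) :
    0 ≤ PP H y :=
  Finset.sum_nonneg fun f _ => Finset.prod_nonneg fun w _ => hy w

lemma SS_nonneg (H : KHypergraph V k) (i : V) {y : V → ℝ} (hy : ∀ j, 0 ≤ y j) :
    0 ≤ SS H i y :=
  Finset.sum_nonneg fun f _ => Finset.prod_nonneg fun w _ => hy w

lemma PP_smul (H : KHypergraph V k) (c : ℝ) (y : V → ℝ) :
    PP H (fun v => c * y v) = c ^ k * PP H y := by
  unfold PP
  rw [Finset.mul_sum]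
  refine Finset.sum_congr rfl fun f hf => ?_
  rw [Finset.prod_mul_distrib, Finset.prod_const, H.uniform f hf]

lemma SS_smul (H : KHypergraph V k) (i : V) (c : ℝ) (y : V → ℝ) :
    SS H i (fun v => c * y v) = c ^ (k - 1) * SS H i y := by
  unfold SS
  rw [Finset.mul_sum]
  refine Finset.sum_congr rfl fun f hf => ?_
  simp only [mem_filter] at hf
  rw [Finset.prod_mul_distrib, Finset.prod_const,
    card_erase_of_mem hf.2, H.uniform f hf.1]

lemma sum_mul_SS (H : KHypergraph V k) (y : V → ℝ) :
    ∑ i, y i * SS H i y = (k : ℝ) * PP H y := by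
  unfold SS PP
  have h1 : ∀ i : V, y i * ∑ f ∈ H.edges.filter (fun f => i ∈ f), ∏ w ∈ f.erase i, y w
      = ∑ f ∈ H.edges, if i ∈ f then ∏ w ∈ f, y w else 0 := by
    intro i
    rw [Finset.mul_sum, Finset.sum_filter]
    refine Finset.sum_congr rfl fun f _ => ?_
    split_ifs with h
    · exact Finset.mul_prod_erase f y h
    · rfl
  rw [Finset.sum_congr rfl fun i _ => h1 i, Finset.sum_comm]
  rw [Finset.mul_sum]
  refine Finset.sum_congr rfl fun f hf => ?_
  rw [Finset.sum_ite_mem, Finset.univ_inter, Finset.sum_const, nsmul_eq_mul,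
    H.uniform f hf]

lemma PP_update (H : KHypergraph V k) (y : V → ℝ) (i : V) (a : ℝ) :
    PP H (Function.update y i a) = PP H y + (a - y i) * SS H i y := by
  classical
  unfold PP SS
  have key : ∀ b : ℝ, ∑ f ∈ H.edges, ∏ w ∈ f, Function.update y i b w
      = (∑ f ∈ H.edges.filter (fun f => ¬ i ∈ f), ∏ w ∈ f, y w)
        + b * ∑ f ∈ H.edges.filter (fun f => i ∈ f), ∏ w ∈ f.erase i, y w := by
    intro b
    rw [← Finset.sum_filter_add_sum_filter_not H.edges (fun f => i ∈ f)]
    rw [add_comm, Finset.mul_sum]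
    congr 1
    · refine Finset.sum_congr rfl fun f hf => ?_
      simp only [mem_filter] at hf
      refine Finset.prod_congr rfl fun w hw => ?_
      exact Function.update_of_ne (fun h : w = i => hf.2 (h ▸ hw)) b y
    · refine Finset.sum_congr rfl fun f hf => ?_
      simp only [mem_filter] at hf
      rw [← Finset.mul_prod_erase f (Function.update y i b) hf.2,
        Function.update_self]
      congr 1
      refine Finset.prod_congr rfl fun w hw => ?_
      exact Function.update_of_ne (Finset.ne_of_mem_erase hw) b y
  have h1 := key a
  have h2 : ∑ f ∈ H.edges, ∏ w ∈ f, y w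
      = (∑ f ∈ H.edges.filter (fun f => ¬ i ∈ f), ∏ w ∈ f, y w)
        + y i * ∑ f ∈ H.edges.filter (fun f => i ∈ f), ∏ w ∈ f.erase i, y w := by
    have := key (y i)
    rwa [Function.update_eq_self] at this
  rw [h1, h2]; ring

lemma sum_pow_update (y : V → ℝ) (i : V) (a : ℝ) :
    ∑ j, Function.update y i a j ^ k = (∑ j, y j ^ k) + a ^ k - y i ^ k := by
  classical
  have h : (fun j => Function.update y i a j ^ k)
      = Function.update (fun j => y j ^ k) i (a ^ k) := by
    funext j
    by_cases hj : j = i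
    · subst hj; simp
    · simp [Function.update_of_ne hj]
  rw [h, Finset.sum_update_of_mem (mem_univ i),
    ← Finset.add_sum_erase _ (fun j => y j ^ k) (mem_univ i),
    Finset.sdiff_singleton_eq_erase]
  ring

end EdgeMovingAux3
section EdgeMovingAux4

set_option linter.unusedSectionVars false
set_option maxHeartbeats 1000000

open Finset Filter Topology

variable {V : Type*} [Fintype V] [DecidableEq V] {k : ℕ}

lemma cone_bound (hk : 1 ≤ k) (H : KHypergraph V k) {y : V → ℝ}
    (hmax : ∀ z : V → ℝ, (∀ i, 0 ≤ z i) → ∑ i, z i ^ k = 1 → PP H z ≤ PP H y) :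
    ∀ z : V → ℝ, (∀ i, 0 ≤ z i) → PP H z ≤ PP H y * ∑ i, z i ^ k := by
  intro z hz0
  set N := ∑ i, z i ^ k with hN
  have hN0 : 0 ≤ N := Finset.sum_nonneg fun i _ => pow_nonneg (hz0 i) k
  rcases eq_or_lt_of_le hN0 with hN0' | hNpos
  · -- N = 0, all z i = 0
    have hz : ∀ i, z i = 0 := by
      intro i
      have h1 : ∀ j ∈ (univ : Finset V), 0 ≤ z j ^ k := fun j _ => pow_nonneg (hz0 j) k
      have h2 := (Finset.sum_eq_zero_iff_of_nonneg h1).1 hN0'.symm i (mem_univ i)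
      exact pow_eq_zero_iff (by omega) |>.1 h2
    have hPP : PP H z = 0 := by
      unfold PP
      refine Finset.sum_eq_zero fun f hf => ?_
      have hcard : f.card = k := H.uniform f hf
      have hne : f.Nonempty := card_pos.1 (by omega)
      obtain ⟨w, hw⟩ := hne
      exact Finset.prod_eq_zero hw (hz w)
    rw [hPP, ← hN0', mul_zero]
  · have hkR : (k : ℝ) ≠ 0 := by positivity
    set c : ℝ := N ^ (-(1 : ℝ) / k) with hc
    have hcpos : 0 < c := Real.rpow_pos_of_pos hNpos _
    have hck : c ^ k = N⁻¹ := by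
      rw [hc, ← Real.rpow_natCast (N ^ (-(1 : ℝ) / k)) k, ← Real.rpow_mul hN0]
      rw [show (-(1 : ℝ) / k) * k = -1 by field_simp, Real.rpow_neg_one]
    have hsum : ∑ i, (c * z i) ^ k = 1 := by
      simp only [mul_pow]
      rw [← Finset.mul_sum, ← hN, hck, inv_mul_cancel₀ (ne_of_gt hNpos)]
    have hle := hmax (fun i => c * z i) (fun i => mul_nonneg hcpos.le (hz0 i)) hsum
    rw [PP_smul] at hle
    have := mul_le_mul_of_nonneg_left hle hN0
    rw [hck] at this
    calc PP H z = N * (N⁻¹ * PP H z) := by field_simp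
    _ ≤ N * PP H y := this
    _ = PP H y * N := mul_comm _ _

lemma exists_maximizer [Nonempty V] (hk : 1 ≤ k) (H : KHypergraph V k) :
    ∃ y : V → ℝ, (∀ i, 0 ≤ y i) ∧ (∑ i, y i ^ k) = 1 ∧
      ∀ z : V → ℝ, (∀ i, 0 ≤ z i) → ∑ i, z i ^ k = 1 → PP H z ≤ PP H y := by
  classical
  set S : Set (V → ℝ) := {y | (∀ i, 0 ≤ y i) ∧ ∑ i, y i ^ k = 1} with hS
  obtain ⟨v0⟩ := (inferInstance : Nonempty V)
  have hne : S.Nonempty := by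
    refine ⟨fun w => if w = v0 then 1 else 0, fun i => by positivity, ?_⟩
    rw [Finset.sum_eq_single v0]
    · simp
    · intro b _ hb; simp [hb, zero_pow (show k ≠ 0 by omega)]
    · intro h; simp at h
  have hclosed : IsClosed S := by
    have h1 : IsClosed {y : V → ℝ | ∀ i, 0 ≤ y i} := by
      have : {y : V → ℝ | ∀ i, 0 ≤ y i} = ⋂ i, {y : V → ℝ | 0 ≤ y i} := by
        ext; simp
      rw [this]
      exact isClosed_iInter fun i => isClosed_le continuous_const (continuous_apply i)
    have h2 : IsClosed {y : V → ℝ | ∑ i, y i ^ k = 1} :=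
      isClosed_eq (by fun_prop) continuous_const
    have : S = {y : V → ℝ | ∀ i, 0 ≤ y i} ∩ {y : V → ℝ | ∑ i, y i ^ k = 1} := by
      ext; simp [hS, Set.mem_setOf_eq, Set.mem_inter_iff]
    rw [this]
    exact h1.inter h2
  have hbdd : Bornology.IsBounded S := by
    refine (Metric.isBounded_closedBall (x := (0 : V → ℝ)) (r := 1)).subset ?_
    intro y hy
    obtain ⟨hy0, hy1⟩ := hy
    rw [Metric.mem_closedBall, dist_zero_right]
    rw [pi_norm_le_iff_of_nonneg zero_le_one]
    intro i
    rw [Real.norm_eq_abs, abs_of_nonneg (hy0 i)]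
    by_contra hcon
    push_neg at hcon
    have h1 : (1 : ℝ) < y i ^ k := one_lt_pow₀ hcon (by omega)
    have h2 : y i ^ k ≤ ∑ j, y j ^ k :=
      Finset.single_le_sum (fun j _ => pow_nonneg (hy0 j) k) (mem_univ i)
    rw [hy1] at h2
    linarith
  have hcompact : IsCompact S := Metric.isCompact_of_isClosed_isBounded hclosed hbdd
  have hcont : Continuous (PP H) := by
    unfold PP
    exact continuous_finset_sum _ fun f _ =>
      continuous_finset_prod _ fun w _ => continuous_apply w
  obtain ⟨y, hyS, hmax⟩ := hcompact.exists_isMaxOn hne hcont.continuousOn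
  exact ⟨y, hyS.1, hyS.2, fun z hz0 hz1 => hmax (show z ∈ S from ⟨hz0, hz1⟩)⟩

lemma maximizer_eigen (hk : 3 ≤ k) (H : KHypergraph V k) {y : V → ℝ}
    (hy0 : ∀ i, 0 ≤ y i) (hyn : ∑ i, y i ^ k = 1)
    (hmax : ∀ z : V → ℝ, (∀ i, 0 ≤ z i) → ∑ i, z i ^ k = 1 → PP H z ≤ PP H y)
    (i : V) :
    SS H i y = ((k : ℝ) * PP H y) * y i ^ (k - 1) := by
  classical
  set lam := PP H y with hlam
  set a := y i with ha
  set c := SS H i y with hc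
  have hcone := cone_bound (by omega) H hmax
  have hφ : ∀ t : ℝ, -a ≤ t → t * c - lam * ((a + t) ^ k - a ^ k) ≤ 0 := by
    intro t ht
    have hz0 : ∀ j, 0 ≤ Function.update y i (a + t) j := by
      intro j
      by_cases hj : j = i
      · subst hj; rw [Function.update_self]; linarith
      · rw [Function.update_of_ne hj]; exact hy0 j
    have h1 := hcone (Function.update y i (a + t)) hz0
    rw [PP_update, sum_pow_update, hyn] at h1
    have : lam + ((a + t) - a) * c ≤ lam * (1 + (a + t) ^ k - a ^ k) := h1
    nlinarith [this]
  have hanneg : 0 ≤ a := hy0 i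
  rcases eq_or_lt_of_le hanneg with ha0 | hapos
  · -- a = 0
    rw [← ha0, zero_pow (show k - 1 ≠ 0 by omega), mul_zero]
    refine le_antisymm ?_ (SS_nonneg H i hy0)
    have hev : ∀ᶠ t in 𝓝[>] (0 : ℝ), c ≤ lam * t ^ (k - 1) := by
      filter_upwards [self_mem_nhdsWithin] with t ht
      have ht' : 0 < t := ht
      have h1 := hφ t (by linarith)
      rw [← ha0] at h1
      have h2 : t * c ≤ lam * t ^ k := by
        have heq : (0 + t) ^ k - 0 ^ k = t ^ k := by
          rw [zero_add, zero_pow (show k ≠ 0 by omega)]; ring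
        rw [heq] at h1; linarith
      have h3 : lam * t ^ k = (lam * t ^ (k - 1)) * t := by
        rw [mul_assoc, ← pow_succ, show k - 1 + 1 = k by omega]
      rw [h3] at h2
      have h4 : c * t ≤ lam * t ^ (k - 1) * t := by rw [mul_comm c t]; exact h2
      exact le_of_mul_le_mul_right h4 ht'
    have hten : Tendsto (fun t : ℝ => lam * t ^ (k - 1)) (𝓝[>] (0 : ℝ)) (𝓝 0) := by
      have hcont : Continuous (fun t : ℝ => lam * t ^ (k - 1)) := by fun_prop
      have := (hcont.tendsto 0).mono_left (nhdsWithin_le_nhds (s := Set.Ioi (0:ℝ)))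
      simpa [zero_pow (show k - 1 ≠ 0 by omega)] using this
    exact ge_of_tendsto hten hev
  · -- a > 0
    have hloc : IsLocalMax (fun t : ℝ => t * c - lam * ((a + t) ^ k - a ^ k)) 0 := by
      have hmem : Set.Ioo (-a) a ∈ 𝓝 (0 : ℝ) := Ioo_mem_nhds (by linarith) hapos
      filter_upwards [hmem] with t ht
      have h0 : (0 : ℝ) * c - lam * ((a + 0) ^ k - a ^ k) = 0 := by ring
      rw [h0]
      exact hφ t (le_of_lt ht.1)
    have h2 : HasDerivAt (fun t : ℝ => (a + t) ^ k) ((k : ℝ) * a ^ (k - 1)) 0 := by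
      have := ((hasDerivAt_id (0 : ℝ)).const_add a).fun_pow k
      simpa using this
    have hder : HasDerivAt (fun t : ℝ => t * c - lam * ((a + t) ^ k - a ^ k))
        (c - lam * ((k : ℝ) * a ^ (k - 1))) 0 := by
      have h1 : HasDerivAt (fun t : ℝ => t * c) c 0 := hasDerivAt_mul_const c
      have h3 := (h2.sub_const (a ^ k)).const_mul lam
      simpa using h1.fun_sub h3
    have := hloc.hasDerivAt_eq_zero hder
    have : c = lam * ((k : ℝ) * a ^ (k - 1)) := by linarith
    rw [this]; ring

end EdgeMovingAux4
section EdgeMovingAux5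

set_option linter.unusedSectionVars false
set_option maxHeartbeats 1000000

open Finset

variable {V : Type*} [Fintype V] [DecidableEq V] {k : ℕ}

lemma tApply_ofReal (T : (Fin k → V) → ℝ) (y : V → ℝ) (i : V) :
    tApply (fun f => ((T f : ℝ) : ℂ)) (fun v => ((y v : ℝ) : ℂ)) i
      = ((tApply T y i : ℝ) : ℂ) := by
  unfold tApply
  push_cast
  rfl

lemma adjTensor_nonneg (H : KHypergraph V k) (f : Fin k → V) : 0 ≤ adjTensor H f := by
  unfold adjTensor
  split_ifs <;> positivity

lemma adjTensor_le (H : KHypergraph V k) (f : Fin k → V) :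
    adjTensor H f ≤ (((k - 1).factorial : ℝ))⁻¹ := by
  unfold adjTensor
  split_ifs
  · exact le_refl _
  · positivity

lemma eig_abs_le (H : KHypergraph V k) {lam : ℂ} (h : IsEig (adjTensor H) lam) :
    ‖lam‖ ≤ (Fintype.card V : ℝ) ^ (k - 1) * (((k - 1).factorial : ℝ))⁻¹ := by
  classical
  obtain ⟨x, hx0, heq⟩ := h
  have hV : Nonempty V := by
    by_contra hemp
    rw [not_nonempty_iff] at hemp
    exact hx0 (funext fun v => hemp.elim v)
  obtain ⟨i, -, hi⟩ := Finset.exists_max_image univ (fun v => ‖x v‖)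
    univ_nonempty
  set M := ‖x i‖ with hM
  have hM0 : 0 < M := by
    rcases (norm_nonneg (x i)).lt_or_eq with h0 | h0
    · exact h0
    · exfalso
      apply hx0
      funext v
      have h1 : ‖x v‖ ≤ 0 := le_trans (hi v (mem_univ v)) (le_of_eq h0.symm)
      have h2 : ‖x v‖ = 0 := le_antisymm h1 (norm_nonneg _)
      simpa using h2
  have key := heq i
  have habs : ‖lam‖ * M ^ (k - 1) = ‖(tApply
      (fun f => ((adjTensor H f : ℝ) : ℂ)) x i)‖ := by
    rw [key, norm_mul, norm_pow]
  set B : ℝ := (Fintype.card V : ℝ) ^ (k - 1) * (((k - 1).factorial : ℝ))⁻¹ with hB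
  have hbound : ‖(tApply (fun f => ((adjTensor H f : ℝ) : ℂ)) x i)‖
      ≤ B * M ^ (k - 1) := by
    unfold tApply
    refine le_trans (norm_sum_le _ _) ?_
    have hterm : ∀ g : Fin (k - 1) → V,
        ‖(((adjTensor H (tupleCons i g) : ℝ) : ℂ) * ∏ j, x (g j))‖
          ≤ (((k - 1).factorial : ℝ))⁻¹ * M ^ (k - 1) := by
      intro g
      rw [norm_mul, Complex.norm_real, Real.norm_eq_abs, abs_of_nonneg (adjTensor_nonneg H _), norm_prod]
      refine mul_le_mul (adjTensor_le H _) ?_ ?_ (by positivity)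
      · calc ∏ j, ‖x (g j)‖ ≤ ∏ _j : Fin (k - 1), M :=
              Finset.prod_le_prod (fun j _ => norm_nonneg _)
                (fun j _ => hi (g j) (mem_univ _))
        _ = M ^ (k - 1) := by rw [Finset.prod_const, Finset.card_univ, Fintype.card_fin]
      · exact Finset.prod_nonneg fun j _ => norm_nonneg _
    refine le_trans (Finset.sum_le_sum fun g _ => hterm g) ?_
    rw [Finset.sum_const, Finset.card_univ, nsmul_eq_mul]
    rw [show (Fintype.card (Fin (k - 1) → V) : ℝ) = (Fintype.card V : ℝ) ^ (k - 1) by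
      rw [Fintype.card_fun, Fintype.card_fin]; push_cast; ring]
    apply le_of_eq
    rw [hB]; ring
  have : ‖lam‖ * M ^ (k - 1) ≤ B * M ^ (k - 1) := by
    rw [habs]; exact hbound
  exact le_of_mul_le_mul_right this (by positivity)

lemma le_hSpecRad (H : KHypergraph V k) {lam : ℝ} (hlam : 0 ≤ lam)
    (hmem : IsEig (adjTensor H) ((lam : ℝ) : ℂ)) : lam ≤ hSpecRad H := by
  unfold hSpecRad specRad
  apply le_csSup
  · exact ⟨(Fintype.card V : ℝ) ^ (k - 1) * (((k - 1).factorial : ℝ))⁻¹, by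
      rintro r ⟨mu, hmu, rfl⟩
      exact eig_abs_le H hmu⟩
  · exact ⟨((lam : ℝ) : ℂ), hmem, by rw [Complex.norm_real, Real.norm_eq_abs, abs_of_nonneg hlam]⟩

end EdgeMovingAux5
set_option maxHeartbeats 1000000 in
/-- (Li–Shao–Qi, edge moving.) Let `G'` be obtained from the
connected hypergraph `G` by moving the edges `e 1, …, e r` from the vertices
`v 1, …, v r` to the vertex `u`, creating no multiple edges. If `x` is a
Perron vector of `G` with `x u ≥ max_i x (v i)`, then `ρ(G') > ρ(G)`. -/
theorem edge_moving {V : Type*} [Fintype V] [DecidableEq V] {k : ℕ} (hk : 3 ≤ k)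
    (G G' : KHypergraph V k) (hconn : G.Connected)
    (r : ℕ) (hr : 1 ≤ r) (e : Fin r → Finset V) (v : Fin r → V) (u : V)
    (he : ∀ i, e i ∈ G.edges) (heinj : Function.Injective e)
    (hv : ∀ i, v i ∈ e i) (hu : ∀ i, u ∉ e i)
    (e' : Fin r → Finset V) (he' : ∀ i, e' i = insert u ((e i).erase (v i)))
    (hnomul₁ : Function.Injective e')
    (hnomul₂ : ∀ i, e' i ∉ G.edges \ Finset.image e Finset.univ)
    (hG' : G'.edges = (G.edges \ Finset.image e Finset.univ) ∪ Finset.image e' Finset.univ)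
    (x : V → ℝ) (hx : IsPerron G x) (hxu : ∀ i, x (v i) ≤ x u) :
    hSpecRad G < hSpecRad G' := by
  classical
  open Finset in
  set ρ := hSpecRad G with hρdef
  obtain ⟨hxpos, hxeig⟩ := hx
  have hk1 : 1 ≤ k := by omega
  have hVne : Nonempty V := ⟨u⟩
  have hSx : ∀ i, SS G i x = ρ * x i ^ (k - 1) := by
    intro i
    rw [← tApply_adj hk1]
    exact hxeig i
  -- normalize x
  set N := ∑ i, x i ^ k with hN
  have hNpos : 0 < N := Finset.sum_pos (fun i _ => pow_pos (hxpos i) k) univ_nonempty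
  set c : ℝ := N ^ (-(1 : ℝ) / k) with hc
  have hcpos : 0 < c := Real.rpow_pos_of_pos hNpos _
  have hck : c ^ k = N⁻¹ := by
    rw [hc, ← Real.rpow_natCast (N ^ (-(1 : ℝ) / k)) k, ← Real.rpow_mul hNpos.le,
      show (-(1 : ℝ) / k) * k = -1 by field_simp, Real.rpow_neg_one]
  set xh : V → ℝ := fun w => c * x w with hxh
  have hxhpos : ∀ i, 0 < xh i := fun i => mul_pos hcpos (hxpos i)
  have hxhnorm : ∑ i, xh i ^ k = 1 := by
    simp only [hxh, mul_pow]
    rw [← Finset.mul_sum, ← hN, hck, inv_mul_cancel₀ (ne_of_gt hNpos)]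
  have hSxh : ∀ i, SS G i xh = ρ * xh i ^ (k - 1) := by
    intro i
    rw [hxh, SS_smul, hSx i, mul_pow]
    ring
  have hpow : ∀ z : ℝ, z * z ^ (k - 1) = z ^ k := by
    intro z
    rw [← pow_succ', show (k - 1) + 1 = k by omega]
  have hPGxh : (k : ℝ) * PP G xh = ρ := by
    calc (k : ℝ) * PP G xh = ∑ i, xh i * SS G i xh := (sum_mul_SS G xh).symm
    _ = ∑ i, ρ * xh i ^ k := by
        refine Finset.sum_congr rfl fun i _ => ?_
        rw [hSxh i]
        calc xh i * (ρ * xh i ^ (k - 1)) = ρ * (xh i * xh i ^ (k - 1)) := by ring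
        _ = ρ * xh i ^ k := by rw [hpow]
    _ = ρ := by rw [← Finset.mul_sum, hxhnorm, mul_one]
  -- edge decompositions
  set E := Finset.image e Finset.univ with hE
  set E' := Finset.image e' Finset.univ with hE'
  have hEsub : E ⊆ G.edges := by
    intro f hf
    obtain ⟨j, -, rfl⟩ := Finset.mem_image.mp hf
    exact he j
  have hE'disj : Disjoint (G.edges \ E) E' := by
    rw [Finset.disjoint_right]
    intro f hf
    obtain ⟨j, -, rfl⟩ := Finset.mem_image.mp hf
    exact hnomul₂ j
  have hPPG : ∀ y : V → ℝ,
      PP G y = (∑ f ∈ G.edges \ E, ∏ w ∈ f, y w) + ∑ j, ∏ w ∈ e j, y w := by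
    intro y
    unfold PP
    conv_lhs => rw [← Finset.sdiff_union_of_subset hEsub]
    rw [Finset.sum_union Finset.sdiff_disjoint,
      Finset.sum_image (fun a _ b _ h => heinj h)]
  have hPPG' : ∀ y : V → ℝ,
      PP G' y = (∑ f ∈ G.edges \ E, ∏ w ∈ f, y w) + ∑ j, ∏ w ∈ e' j, y w := by
    intro y
    unfold PP
    rw [hG', Finset.sum_union hE'disj,
      Finset.sum_image (fun a _ b _ h => hnomul₁ h)]
  have hprod' : ∀ (j : Fin r) (y : V → ℝ),
      ∏ w ∈ e' j, y w = y u * ∏ w ∈ (e j).erase (v j), y w := by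
    intro j y
    rw [he' j, Finset.prod_insert (fun hm => hu j (Finset.mem_of_mem_erase hm))]
  have hprod : ∀ (j : Fin r) (y : V → ℝ),
      ∏ w ∈ e j, y w = y (v j) * ∏ w ∈ (e j).erase (v j), y w := by
    intro j y
    exact (Finset.mul_prod_erase (e j) y (hv j)).symm
  have hmono : PP G xh ≤ PP G' xh := by
    rw [hPPG xh, hPPG' xh]
    refine add_le_add (le_refl _) (Finset.sum_le_sum fun j _ => ?_)
    rw [hprod j xh, hprod' j xh]
    refine mul_le_mul_of_nonneg_right ?_
      (Finset.prod_nonneg fun w _ => (hxhpos w).le)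
    exact mul_le_mul_of_nonneg_left (hxu j) hcpos.le
  -- maximizer of PP G' on the unit sphere of the k-norm
  obtain ⟨y, hy0, hyn, hymax⟩ := exists_maximizer hk1 G'
  set lam := PP G' y with hlam
  have hlamnn : 0 ≤ lam := PP_nonneg G' hy0
  have heig := maximizer_eigen hk G' hy0 hyn hymax
  have hIsEig : IsEig (adjTensor G') ((((k : ℝ) * lam : ℝ)) : ℂ) := by
    refine ⟨fun w => ((y w : ℝ) : ℂ), ?_, ?_⟩
    · intro h0
      have hz : ∀ w, y w = 0 := by
        intro w
        have := congrFun h0 w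
        simpa using this
      rw [Finset.sum_congr rfl
        (fun i _ => by rw [hz i, zero_pow (show k ≠ 0 by omega)])] at hyn
      simp at hyn
    · intro i
      rw [tApply_ofReal, tApply_adj hk1, heig i]
      push_cast
      ring
  have hspec' : (k : ℝ) * lam ≤ hSpecRad G' :=
    le_hSpecRad G' (mul_nonneg (by positivity) hlamnn) hIsEig
  have h1 : PP G' xh ≤ lam := hymax xh (fun i => (hxhpos i).le) hxhnorm
  have hge : ρ ≤ (k : ℝ) * lam := by
    calc ρ = (k : ℝ) * PP G xh := hPGxh.symm
    _ ≤ (k : ℝ) * PP G' xh := by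
        exact mul_le_mul_of_nonneg_left hmono (by positivity)
    _ ≤ (k : ℝ) * lam := mul_le_mul_of_nonneg_left h1 (by positivity)
  by_contra hcon
  push_neg at hcon
  have hklam : (k : ℝ) * lam = ρ := le_antisymm (le_trans hspec' hcon) hge
  have hkpos : (0 : ℝ) < k := by positivity
  have heq2 : PP G' xh = lam := by
    refine le_antisymm h1 ?_
    have h3 : (k : ℝ) * lam ≤ (k : ℝ) * PP G' xh := by
      rw [hklam, ← hPGxh]
      exact mul_le_mul_of_nonneg_left hmono (by positivity)
    exact le_of_mul_le_mul_left h3 hkpos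
  have heigxh := maximizer_eigen hk G' (fun i => (hxhpos i).le) hxhnorm
    (fun z hz0 hz1 => (hymax z hz0 hz1).trans (le_of_eq heq2.symm))
  -- compare SS at u
  have hfilG : G.edges.filter (fun f => u ∈ f) = (G.edges \ E).filter (fun f => u ∈ f) := by
    conv_lhs => rw [← Finset.sdiff_union_of_subset hEsub]
    rw [Finset.filter_union]
    have hEempty : E.filter (fun f => u ∈ f) = ∅ := by
      rw [Finset.filter_eq_empty_iff]
      intro f hf
      obtain ⟨j, -, rfl⟩ := Finset.mem_image.mp hf
      exact hu j
    rw [hEempty, Finset.union_empty]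
  have hfilG' : G'.edges.filter (fun f => u ∈ f)
      = (G.edges \ E).filter (fun f => u ∈ f) ∪ E' := by
    rw [hG', Finset.filter_union]
    congr 1
    rw [Finset.filter_true_of_mem]
    intro f hf
    obtain ⟨j, -, rfl⟩ := Finset.mem_image.mp hf
    rw [he' j]
    exact Finset.mem_insert_self _ _
  have hSSu : SS G' u xh = SS G u xh + ∑ j, ∏ w ∈ (e j).erase (v j), xh w := by
    unfold SS
    rw [hfilG, hfilG',
      Finset.sum_union (Finset.disjoint_of_subset_left (Finset.filter_subset _ _) hE'disj)]
    congr 1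
    rw [Finset.sum_image (fun a _ b _ h => hnomul₁ h)]
    refine Finset.sum_congr rfl fun j _ => ?_
    rw [he' j, Finset.erase_insert (fun hm => hu j (Finset.mem_of_mem_erase hm))]
  have hposrest : 0 < ∑ j, ∏ w ∈ (e j).erase (v j), xh w := by
    have : Nonempty (Fin r) := ⟨⟨0, by omega⟩⟩
    exact Finset.sum_pos (fun j _ => Finset.prod_pos fun w _ => hxhpos w) univ_nonempty
  have hfin1 : SS G' u xh = ρ * xh u ^ (k - 1) := by
    rw [heigxh u, heq2, hklam]
  have hfin2 : SS G u xh = ρ * xh u ^ (k - 1) := hSxh u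
  rw [hfin1, hfin2] at hSSu
  linarith
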